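/- arXiv:1607.08453 — 5 statements merged into one kernel-verified Lean document; each statement's English description precedes it below -/
import Mathlib

section
/- If f is a surjective domatic homomorphism from H to F, then the map g defined by g((u,v)) = (u, f(v)) is a surjective domatic homomorphism from the Cartesian product G □ H to G □ F. -/
/-- Cartesian (box) product of simple graphs. -/
def cartProd {α β : Type*} (G : SimpleGraph α) (H : SimpleGraph β) : SimpleGraph (α × β) where
  Adj a b := (a.1 = b.1 ∧ H.Adj a.2 b.2) ∨ (G.Adj a.1 b.1 ∧ a.2 = b.2)
  symm := by
    constructor
    rintro a b (⟨h1, h2⟩ | ⟨h1, h2⟩)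
    · exact Or.inl ⟨h1.symm, h2.symm⟩
    · exact Or.inr ⟨h1.symm, h2.symm⟩
  loopless := by constructor; rintro a (⟨-, h⟩ | ⟨h, -⟩) <;> exact h.ne rfl

/-- A domatic homomorphism. -/
def IsDomatic {α β : Type*} (G : SimpleGraph α) (H : SimpleGraph β) (f : α → β) : Prop :=
  ∀ ⦃u' v'⦄, H.Adj u' v' → ∀ u, f u = u' → ∃ v, f v = v' ∧ G.Adj u v

theorem stmt7 {α β γ : Type*} (G : SimpleGraph α) (H : SimpleGraph β) (F : SimpleGraph γ)
    (f : β → γ) (hf : IsDomatic H F f) (hsurj : Function.Surjective f) :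
    IsDomatic (cartProd G H) (cartProd G F) (fun x => (x.1, f x.2)) ∧
      Function.Surjective (fun x : α × β => (x.1, f x.2)) := by
  constructor
  · rintro ⟨a', c'⟩ ⟨b', d'⟩ (⟨h1, h2⟩ | ⟨h1, h2⟩) ⟨a, c⟩ heq <;>
      simp only [Prod.mk.injEq] at * <;> obtain ⟨ha, hc⟩ := heq
    · obtain ⟨v, hv, hadj⟩ := hf h2 c hc
      exact ⟨(a, v), ⟨h1 ▸ ha, hv⟩, Or.inl ⟨rfl, hadj⟩⟩
    · exact ⟨(b', c), ⟨rfl, h2 ▸ hc⟩, Or.inr ⟨ha ▸ h1, rfl⟩⟩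
  · rintro ⟨a, c⟩
    obtain ⟨v, hv⟩ := hsurj c
    exact ⟨(a, v), by simp [hv]⟩
end

section
/- For positive integers p ≤ q, every fall-coloring of the Cartesian product K_p □ K_q uses exactly q colors; that is, the fall-spectrum of K_p □ K_q equals {max(p,q)}. -/
/-- A fall-coloring with `k` colors: a proper coloring in which every vertex is a b-vertex. -/
def IsFallColoring {α : Type*} (G : SimpleGraph α) (k : ℕ) (f : α → Fin k) : Prop :=
  (∀ ⦃a b⦄, G.Adj a b → f a ≠ f b) ∧
  ∀ a : α, ∀ c : Fin k, c ≠ f a → ∃ b, G.Adj a b ∧ f b = c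

theorem stmt14 (p q : ℕ) (hp : 0 < p) (hpq : p ≤ q) (k : ℕ) :
    (∃ f : Fin p × Fin q → Fin k,
      IsFallColoring (cartProd (⊤ : SimpleGraph (Fin p)) (⊤ : SimpleGraph (Fin q))) k f) ↔
    k = max p q := by
  have hq : 0 < q := lt_of_lt_of_le hp hpq
  rw [max_eq_right hpq]
  constructor
  · rintro ⟨f, hprop, hfall⟩
    -- k ≥ q : row 0 is injectively colored
    set i0 : Fin p := ⟨0, hp⟩ with hi0
    have ginj : Function.Injective (fun j : Fin q => f (i0, j)) := by
      intro j j' hjj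
      by_contra hne
      exact hprop (a := (i0, j)) (b := (i0, j'))
        (Or.inl ⟨rfl, by simpa using hne⟩) hjj
    have hqk : q ≤ k := by
      simpa using Fintype.card_le_of_injective _ ginj
    -- k ≤ q
    by_contra hk
    have hklt : q < k := lt_of_le_of_ne hqk (by omega)
    have hns : ¬ Function.Surjective (fun j : Fin q => f (i0, j)) := by
      intro hs
      have := Fintype.card_le_of_surjective _ hs
      simp at this
      omega
    unfold Function.Surjective at hns
    push_neg at hns
    obtain ⟨c, hc⟩ := hns
    -- c appears in every column
    have H : ∀ j : Fin q, ∃ i : Fin p, f (i, j) = c := by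
      intro j
      obtain ⟨b, hadj, hb⟩ := hfall (i0, j) c (fun h => hc j h.symm)
      rcases hadj with ⟨h1, _⟩ | ⟨_, h2⟩
      · exact absurd hb (by rw [show b = (i0, b.2) from Prod.ext h1.symm rfl]; exact fun h => hc b.2 h)
      · exact ⟨b.1, by rw [show (b.1, j) = b from Prod.ext rfl h2]; exact hb⟩
    choose h hh using H
    have hinj : Function.Injective h := by
      intro j j' hjj
      by_contra hne
      have : f (h j, j) ≠ f (h j', j') :=
        hprop (a := (h j, j)) (b := (h j', j'))
          (Or.inl ⟨by rw [hjj], by simpa using hne⟩)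
      rw [hh j, hh j'] at this
      exact this rfl
    have hqp : q ≤ p := by simpa using Fintype.card_le_of_injective h hinj
    have hpq' : p = q := le_antisymm hpq hqp
    have hbij : Function.Bijective h :=
      (Fintype.bijective_iff_injective_and_card h).2 ⟨hinj, by simp [hpq']⟩
    obtain ⟨j, hj⟩ := hbij.2 i0
    exact hc j (by rw [← hj]; exact hh j)
  · intro hk
    subst hk
    haveI : NeZero k := ⟨hq.ne'⟩
    refine ⟨fun a => Fin.castLE hpq a.1 + a.2, ?_, ?_⟩
    · rintro ⟨a1, a2⟩ ⟨b1, b2⟩ (⟨h1, h2⟩ | ⟨h1, h2⟩) heq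
      · simp only at h1 heq
        subst h1
        have := add_left_cancel heq
        exact (by simpa using h2 : a2 ≠ b2) this
      · simp only at h2 heq
        subst h2
        have := add_right_cancel heq
        rw [Fin.castLE_inj] at this
        exact (by simpa using h1 : a1 ≠ b1) this
    · rintro ⟨i, j⟩ c hc
      refine ⟨(i, c - Fin.castLE hpq i), Or.inl ⟨rfl, ?_⟩, ?_⟩
      · simp only [SimpleGraph.top_adj]
        intro hje
        apply hc
        show c = Fin.castLE hpq i + j
        rw [hje]
        abel
      · show Fin.castLE hpq i + (c - Fin.castLE hpq i) = c
        abel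
end

section
/- For integers p, q ≥ 2, every b-coloring of the direct product K_p × K_q is either the 'row coloring' (coloring (u_i, v_j) with i) or the 'column coloring' (coloring (u_i, v_j) with j), up to renaming colors; consequently the set of numbers of colors of b-colorings of K_p × K_q is exactly {p, q}. -/
/-- Direct (tensor) product of simple graphs. -/
def tensorProd {α β : Type*} (G : SimpleGraph α) (H : SimpleGraph β) : SimpleGraph (α × β) where
  Adj a b := G.Adj a.1 b.1 ∧ H.Adj a.2 b.2
  symm := ⟨by rintro a b ⟨h1, h2⟩; exact ⟨h1.symm, h2.symm⟩⟩
  loopless := ⟨by rintro a ⟨h, -⟩; exact h.ne rfl⟩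

/-- A b-coloring with `k` colors: proper, all colors used, each class has a b-vertex. -/
def IsBColoring {α : Type*} (G : SimpleGraph α) (k : ℕ) (f : α → Fin k) : Prop :=
  (∀ ⦃a b⦄, G.Adj a b → f a ≠ f b) ∧ Function.Surjective f ∧
  ∀ c : Fin k, ∃ a, f a = c ∧ ∀ c' : Fin k, c' ≠ c → ∃ b, G.Adj a b ∧ f b = c'

namespace Stmt15Aux

abbrev KG (p q : ℕ) : SimpleGraph (Fin p × Fin q) :=
  tensorProd (⊤ : SimpleGraph (Fin p)) (⊤ : SimpleGraph (Fin q))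

variable {p q k : ℕ}

lemma KG_adj {x y : Fin p × Fin q} :
    (KG p q).Adj x y ↔ x.1 ≠ y.1 ∧ x.2 ≠ y.2 := by
  simp [tensorProd, KG]

lemma swap_b (f : Fin p × Fin q → Fin k) (h : IsBColoring (KG p q) k f) :
    IsBColoring (KG q p) k (f ∘ Prod.swap) := by
  obtain ⟨h1, h2, h3⟩ := h
  refine ⟨?_, ?_, ?_⟩
  · intro a b hab
    exact h1 (KG_adj.mpr ⟨(KG_adj.mp hab).2, (KG_adj.mp hab).1⟩)
  · intro c
    obtain ⟨x, hx⟩ := h2 c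
    exact ⟨(x.2, x.1), hx⟩
  · intro c
    obtain ⟨a, ha, hbv⟩ := h3 c
    refine ⟨(a.2, a.1), ha, fun c' hc' => ?_⟩
    obtain ⟨b, hadj, hb⟩ := hbv c' hc'
    exact ⟨(b.2, b.1), KG_adj.mpr ⟨(KG_adj.mp hadj).2, (KG_adj.mp hadj).1⟩, hb⟩

lemma lemP (f : Fin p × Fin q → Fin k)
    (h1 : ∀ ⦃a b⦄, (KG p q).Adj a b → f a ≠ f b)
    {x y : Fin p × Fin q} (hxy : f x = f y) : x.1 = y.1 ∨ x.2 = y.2 := by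
  by_contra hc
  push_neg at hc
  exact h1 (KG_adj.mpr hc) hxy

/-- Cross lemma: a color class cannot contain both two vertices in distinct columns
and two vertices in distinct rows. -/
lemma lemCross (f : Fin p × Fin q → Fin k)
    (h1 : ∀ ⦃a b⦄, (KG p q).Adj a b → f a ≠ f b)
    {x y z w : Fin p × Fin q} (hxy : f x = f y) (hzx : f z = f x) (hwx : f w = f x)
    (hx2 : x.2 ≠ y.2) (hz1 : z.1 ≠ w.1) : False := by
  have exy : x.1 = y.1 := (lemP f h1 hxy).resolve_right hx2
  have ezw : z.2 = w.2 := (lemP f h1 (hzx.trans hwx.symm)).resolve_left hz1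
  have pxz := lemP f h1 hzx.symm
  have pxw := lemP f h1 hwx.symm
  have pyz := lemP f h1 (hzx.trans hxy).symm
  have pyw := lemP f h1 (hwx.trans hxy).symm
  obtain ⟨x1, x2⟩ := x
  obtain ⟨y1, y2⟩ := y
  obtain ⟨z1, z2⟩ := z
  obtain ⟨w1, w2⟩ := w
  simp only at exy ezw pxz pxw pyz pyw hx2 hz1
  rcases pxz with h | h <;> rcases pxw with h' | h' <;>
    rcases pyz with h'' | h'' <;> rcases pyw with h''' | h''' <;> simp_all

/-- If every class is contained in a column, then every column is monochromatic. -/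
lemma lemA (f : Fin p × Fin q → Fin k)
    (h3 : ∀ c : Fin k, ∃ a, f a = c ∧ ∀ c' : Fin k, c' ≠ c →
      ∃ b, (KG p q).Adj a b ∧ f b = c')
    (hc : ∀ u v : Fin p × Fin q, f u = f v → u.2 = v.2) :
    ∀ u v : Fin p × Fin q, u.2 = v.2 → f u = f v := by
  intro u v huv
  by_contra hne
  obtain ⟨a, ha, hbv⟩ := h3 (f u)
  obtain ⟨b, hadj, hfb⟩ := hbv (f v) (Ne.symm hne)
  have e1 : a.2 = u.2 := hc a u ha
  have e2 : b.2 = v.2 := hc b v hfb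
  exact (KG_adj.mp hadj).2 (by rw [e1, e2, huv])

/-- The key impossibility: there cannot be both a strictly-row class and a
strictly-column class. -/
lemma lemB (f : Fin p × Fin q → Fin k)
    (h1 : ∀ ⦃a b⦄, (KG p q).Adj a b → f a ≠ f b)
    (h3 : ∀ c : Fin k, ∃ a, f a = c ∧ ∀ c' : Fin k, c' ≠ c →
      ∃ b, (KG p q).Adj a b ∧ f b = c')
    {x y z w : Fin p × Fin q}
    (hx : f x = f y) (hx2 : x.2 ≠ y.2) (hz : f z = f w) (hz1 : z.1 ≠ w.1) : False := by
  have hcc' : f x ≠ f z := fun h =>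
    lemCross f h1 hx h.symm (hz.symm.trans h.symm) hx2 hz1
  have rowc : ∀ u : Fin p × Fin q, f u = f x → u.1 = x.1 := by
    intro u hu
    by_contra hne
    exact lemCross f h1 hx hu rfl hx2 hne
  have colc : ∀ u : Fin p × Fin q, f u = f z → u.2 = z.2 := by
    intro u hu
    by_contra hne
    exact lemCross f h1 hu hu.symm (hz.symm.trans hu.symm) hne hz1
  obtain ⟨a, ha, hba⟩ := h3 (f x)
  obtain ⟨a', ha', hba'⟩ := h3 (f z)
  -- the b-vertex of the column class is not in the row of the row class
  have hri : a'.1 ≠ x.1 := by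
    obtain ⟨b, hadj, hb⟩ := hba' (f x) hcc'
    have hb1 : b.1 = x.1 := rowc b hb
    exact fun h => (KG_adj.mp hadj).1 (by rw [hb1]; exact h)
  -- the b-vertex of the row class is not in the column of the column class
  have hsj : a.2 ≠ z.2 := by
    obtain ⟨b, hadj, hb⟩ := hba (f z) (Ne.symm hcc')
    have hb2 : b.2 = z.2 := colc b hb
    exact fun h => (KG_adj.mp hadj).2 (by rw [hb2]; exact h)
  -- consider the vertex (a'.1, a.2)
  have he_c : f (a'.1, a.2) ≠ f x := fun h => hri (rowc (a'.1, a.2) h)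
  have he_c' : f (a'.1, a.2) ≠ f z := fun h => hsj (colc (a'.1, a.2) h)
  -- its color class is a singleton
  have hsing : ∀ u : Fin p × Fin q, f u = f (a'.1, a.2) → u = (a'.1, a.2) := by
    intro u hu
    have h2s : u.2 = a.2 := by
      by_contra hne2
      have rowe : ∀ v : Fin p × Fin q, f v = f (a'.1, a.2) → v.1 = a'.1 := by
        intro v hv
        by_contra hne1
        exact lemCross f h1 hu (hv.trans hu.symm) hu.symm hne2 hne1
      obtain ⟨b, hadj, hb⟩ := hba' (f (a'.1, a.2)) he_c'
      exact (KG_adj.mp hadj).1 (rowe b hb).symm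
    have h1s : u.1 = a'.1 := by
      by_contra hne1
      have cole : ∀ v : Fin p × Fin q, f v = f (a'.1, a.2) → v.2 = a.2 := by
        intro v hv
        by_contra hne2
        exact lemCross f h1 hv (hu.trans hv.symm) hv.symm hne2 hne1
      obtain ⟨b, hadj, hb⟩ := hba (f (a'.1, a.2)) he_c
      exact (KG_adj.mp hadj).2 (cole b hb).symm
    exact Prod.ext h1s h2s
  -- but the b-vertex of the row class must see this singleton class, impossible
  obtain ⟨b, hadj, hb⟩ := hba (f (a'.1, a.2)) he_c
  have hbw : b = (a'.1, a.2) := hsing b hb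
  exact (KG_adj.mp hadj).2 (by rw [hbw])

lemma rigid (f : Fin p × Fin q → Fin k) (hB : IsBColoring (KG p q) k f) :
    (∀ x y : Fin p × Fin q, f x = f y ↔ x.1 = y.1) ∨
    (∀ x y : Fin p × Fin q, f x = f y ↔ x.2 = y.2) := by
  obtain ⟨h1, h2, h3⟩ := hB
  by_cases hR : ∀ u v : Fin p × Fin q, f u = f v → u.1 = v.1
  · left
    obtain ⟨g1, g2, g3⟩ := swap_b f ⟨h1, h2, h3⟩
    have key := lemA (f ∘ Prod.swap) g3
      (fun u v h => hR (u.2, u.1) (v.2, v.1) h)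
    intro x y
    exact ⟨hR x y, fun h => key (x.2, x.1) (y.2, y.1) h⟩
  · push_neg at hR
    obtain ⟨z, w, hz, hz1⟩ := hR
    have hC : ∀ u v : Fin p × Fin q, f u = f v → u.2 = v.2 := by
      intro u v huv
      by_contra hne
      exact lemB f h1 h3 huv hne hz hz1
    right
    intro x y
    exact ⟨hC x y, fun h => lemA f h3 hC x y h⟩

lemma card_eq_row (f : Fin p × Fin q → Fin k) (h2 : Function.Surjective f)
    (hq : 0 < q) (hRow : ∀ x y : Fin p × Fin q, f x = f y ↔ x.1 = y.1) : k = p := by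
  have hb : Function.Bijective (fun i : Fin p => f (i, ⟨0, hq⟩)) := by
    constructor
    · intro i i' h
      exact (hRow (i, ⟨0, hq⟩) (i', ⟨0, hq⟩)).mp h
    · intro c
      obtain ⟨x, hx⟩ := h2 c
      exact ⟨x.1, ((hRow (x.1, ⟨0, hq⟩) x).mpr rfl).trans hx⟩
  have hcard := Fintype.card_of_bijective hb
  simpa using hcard.symm

lemma rowColoring (hp : 2 ≤ p) (hq : 2 ≤ q) :
    IsBColoring (KG p q) p (fun x => x.1) := by
  have h0 : (0 : ℕ) < q := by omega
  have h1lt : (1 : ℕ) < q := by omega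
  refine ⟨?_, ?_, ?_⟩
  · intro a b hab
    exact (KG_adj.mp hab).1
  · intro c
    exact ⟨(c, ⟨0, h0⟩), rfl⟩
  · intro c
    refine ⟨(c, ⟨0, h0⟩), rfl, fun c' hc' => ?_⟩
    refine ⟨(c', ⟨1, h1lt⟩), KG_adj.mpr ⟨Ne.symm hc', ?_⟩, rfl⟩
    exact Fin.ne_of_val_ne (by simp)

end Stmt15Aux

open Stmt15Aux in
theorem stmt15 (p q : ℕ) (hp : 2 ≤ p) (hq : 2 ≤ q) :
    (∀ (k : ℕ) (f : Fin p × Fin q → Fin k),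
      IsBColoring (tensorProd (⊤ : SimpleGraph (Fin p)) (⊤ : SimpleGraph (Fin q))) k f →
        (∀ x y : Fin p × Fin q, f x = f y ↔ x.1 = y.1) ∨
        (∀ x y : Fin p × Fin q, f x = f y ↔ x.2 = y.2)) ∧
    (∀ k : ℕ, (∃ f : Fin p × Fin q → Fin k,
      IsBColoring (tensorProd (⊤ : SimpleGraph (Fin p)) (⊤ : SimpleGraph (Fin q))) k f) ↔
        (k = p ∨ k = q)) := by
  constructor
  · intro k f hB
    exact rigid f hB
  · intro k
    constructor
    · rintro ⟨f, hB⟩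
      rcases rigid f hB with h | h
      · exact Or.inl (card_eq_row f hB.2.1 (by omega) h)
      · -- column case: transfer to the swapped graph
        have hsw := swap_b f hB
        refine Or.inr (card_eq_row (f ∘ Prod.swap) hsw.2.1 (by omega) ?_)
        intro x y
        exact h (x.2, x.1) (y.2, y.1)
    · rintro (rfl | rfl)
      · exact ⟨fun x => x.1, rowColoring hp hq⟩
      · exact ⟨fun x => x.2, swap_b (fun x => x.1) (rowColoring hq hp)⟩
end

section
/- For integers p, q ≥ 2, the fall-spectrum of the direct product K_p × K_q equals {p, q}. -/
theorem stmt16 (p q : ℕ) (hp : 2 ≤ p) (hq : 2 ≤ q) (k : ℕ) :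
    (∃ f : Fin p × Fin q → Fin k,
      IsFallColoring (tensorProd (⊤ : SimpleGraph (Fin p)) (⊤ : SimpleGraph (Fin q))) k f) ↔
    (k = p ∨ k = q) := by
  have hntp : Nontrivial (Fin p) := Fin.nontrivial_iff_two_le.mpr hp
  have hntq : Nontrivial (Fin q) := Fin.nontrivial_iff_two_le.mpr hq
  have hadj : ∀ a b : Fin p × Fin q,
      (tensorProd (⊤ : SimpleGraph (Fin p)) (⊤ : SimpleGraph (Fin q))).Adj a b ↔
      (a.1 ≠ b.1 ∧ a.2 ≠ b.2) := by
    intro a b; simp [tensorProd]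
  constructor
  · rintro ⟨f, hprop, hfall⟩
    have hA : ∀ a b : Fin p × Fin q, f a = f b → a.1 = b.1 ∨ a.2 = b.2 := by
      intro a b hfab
      by_contra h
      push_neg at h
      exact hprop ((hadj a b).mpr ⟨h.1, h.2⟩) hfab
    have hBrow : ∀ a b : Fin p × Fin q, f a = f b → a.1 = b.1 → a.2 ≠ b.2 →
        ∀ x, f x = f a ↔ x.1 = a.1 := by
      intro a b hfab h1 h2
      have hsub : ∀ x : Fin p × Fin q, f x = f a → x.1 = a.1 := by
        intro x hx
        rcases hA x a hx with h | hxa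
        · exact h
        · rcases hA x b (hx.trans hfab) with h | hxb
          · exact h.trans h1.symm
          · exact absurd (hxa.symm.trans hxb) h2
      intro x
      refine ⟨hsub x, fun hx1 => ?_⟩
      by_contra hne
      obtain ⟨y, hady, hfy⟩ := hfall x (f a) (fun h => hne h.symm)
      exact ((hadj x y).mp hady).1 (hx1.trans (hsub y hfy).symm)
    have hBcol : ∀ a b : Fin p × Fin q, f a = f b → a.2 = b.2 → a.1 ≠ b.1 →
        ∀ x, f x = f a ↔ x.2 = a.2 := by
      intro a b hfab h2 h1
      have hsub : ∀ x : Fin p × Fin q, f x = f a → x.2 = a.2 := by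
        intro x hx
        rcases hA x a hx with hxa | h
        · rcases hA x b (hx.trans hfab) with hxb | h
          · exact absurd (hxa.symm.trans hxb) h1
          · exact h.trans h2.symm
        · exact h
      intro x
      refine ⟨hsub x, fun hx2 => ?_⟩
      by_contra hne
      obtain ⟨y, hady, hfy⟩ := hfall x (f a) (fun h => hne h.symm)
      exact ((hadj x y).mp hady).2 (hx2.trans (hsub y hfy).symm)
    have hD : ∀ a : Fin p × Fin q,
        (∀ x, f x = f a ↔ x.1 = a.1) ∨ (∀ x, f x = f a ↔ x.2 = a.2) := by
      intro a
      obtain ⟨j, hj⟩ := exists_ne a.2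
      by_cases hx : f (a.1, j) = f a
      · exact Or.inl (hBrow a (a.1, j) hx.symm rfl (Ne.symm hj))
      · obtain ⟨y, hady, hfy⟩ := hfall (a.1, j) (f a) (fun h => hx h.symm)
        have h1 : y.1 ≠ a.1 := Ne.symm ((hadj _ y).mp hady).1
        have h2 : y.2 = a.2 := by
          rcases hA y a hfy with h | h
          · exact absurd h h1
          · exact h
        exact Or.inr (hBcol a y hfy.symm h2.symm (Ne.symm h1))
    set a₀ : Fin p × Fin q := (⟨0, by omega⟩, ⟨0, by omega⟩) with ha₀
    rcases hD a₀ with hrow | hcol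
    · -- all classes are rows; k = p
      left
      have hall : ∀ a x : Fin p × Fin q, f x = f a ↔ x.1 = a.1 := by
        intro a
        rcases hD a with h | h
        · exact h
        · exfalso
          have h01 : f (a₀.1, a.2) = f a := (h _).mpr rfl
          have h02 : f (a₀.1, a.2) = f a₀ := (hrow _).mpr rfl
          have h1 : f ((⟨1, by omega⟩ : Fin p), a.2) = f a := (h _).mpr rfl
          have := (hrow _).mp (h1.trans (h01.symm.trans h02))
          simp [ha₀, Fin.mk.injEq] at this
      have hbij : Function.Bijective (fun i : Fin p => f (i, a₀.2)) := by
        constructor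
        · intro i i' hii
          exact (hall (i', a₀.2) (i, a₀.2)).mp hii
        · intro c
          by_cases hc : c = f a₀
          · exact ⟨a₀.1, by simpa [ha₀] using hc.symm⟩
          · obtain ⟨b, _, hfb⟩ := hfall a₀ c hc
            exact ⟨b.1, ((hall b (b.1, a₀.2)).mpr rfl).trans hfb⟩
      have := Fintype.card_of_bijective hbij
      simpa using this.symm
    · -- all classes are columns; k = q
      right
      have hall : ∀ a x : Fin p × Fin q, f x = f a ↔ x.2 = a.2 := by
        intro a
        rcases hD a with h | h
        · exfalso
          have h01 : f (a.1, a₀.2) = f a := (h _).mpr rfl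
          have h02 : f (a.1, a₀.2) = f a₀ := (hcol _).mpr rfl
          have h1 : f (a.1, (⟨1, by omega⟩ : Fin q)) = f a := (h _).mpr rfl
          have := (hcol _).mp (h1.trans (h01.symm.trans h02))
          simp [ha₀, Fin.mk.injEq] at this
        · exact h
      have hbij : Function.Bijective (fun j : Fin q => f (a₀.1, j)) := by
        constructor
        · intro j j' hjj
          exact (hall (a₀.1, j') (a₀.1, j)).mp hjj
        · intro c
          by_cases hc : c = f a₀
          · exact ⟨a₀.2, by simpa [ha₀] using hc.symm⟩
          · obtain ⟨b, _, hfb⟩ := hfall a₀ c hc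
            exact ⟨b.2, ((hall b (a₀.1, b.2)).mpr rfl).trans hfb⟩
      have := Fintype.card_of_bijective hbij
      simpa using this.symm
  · rintro (rfl | rfl)
    · refine ⟨fun a => a.1, fun a b hab => ((hadj a b).mp hab).1, fun a c hc => ?_⟩
      obtain ⟨j, hj⟩ := exists_ne a.2
      exact ⟨(c, j), (hadj _ _).mpr ⟨Ne.symm hc, Ne.symm hj⟩, rfl⟩
    · refine ⟨fun a => a.2, fun a b hab => ((hadj a b).mp hab).2, fun a c hc => ?_⟩
      obtain ⟨i, hi⟩ := exists_ne a.1
      exact ⟨(i, c), (hadj _ _).mpr ⟨Ne.symm hi, Ne.symm hc⟩, rfl⟩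
end

section
/- Let G be a graph with χ(G) ≥ 2 admitting a fall-coloring with k colors, and let H be a graph with no isolated vertices. Then the direct product G × H admits a fall-coloring with k colors, obtained by coloring (u,v) with the color of u. -/
theorem stmt18 {α β : Type*} (G : SimpleGraph α) (H : SimpleGraph β) (k : ℕ)
    (f : α → Fin k) (hf : IsFallColoring G k f)
    (hchi : 2 ≤ G.chromaticNumber) (hiso : ∀ v : β, ∃ w, H.Adj v w) :
    IsFallColoring (tensorProd G H) k (fun x => f x.1) := by
  obtain ⟨hp, hb⟩ := hf
  refine ⟨fun a b hab => hp hab.1, fun a c hc => ?_⟩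
  obtain ⟨b, hab, hfb⟩ := hb a.1 c hc
  obtain ⟨w, hvw⟩ := hiso a.2
  exact ⟨(b, w), ⟨hab, hvw⟩, hfb⟩
end
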